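/- Define T(α;λ) = √(α/λ) ∫₀¹ ((1-αz)(1-α) - λα(1-z)) / (√(1-z)·√(2(1-αz)(1-α) - λα(1-z))) dz for λ > 0 and α ∈ (0, 1/(1+λ)]. Then 0 < T(α;λ) ≤ (√(1+λ)/λ)·log((1+√α)/(1-√α)); in particular the integral converges. -/

import Mathlib

open MeasureTheory Set intervalIntegral

lemma two_mul_le_log_aux {x : ℝ} (hx0 : 0 ≤ x) (hx1 : x < 1) :
    2 * x ≤ Real.log ((1 + x) / (1 - x)) := by
  set g : ℝ → ℝ := fun t => Real.log (1 + t) - Real.log (1 - t) - 2 * t with hg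
  have hd : ∀ t ∈ interior (Icc (0:ℝ) x),
      HasDerivAt g (1 / (1 + t) - (-1) / (1 - t) - 2) t := by
    intro t ht
    rw [interior_Icc] at ht
    have h1 : (0:ℝ) < 1 + t := by nlinarith [ht.1]
    have h2 : (0:ℝ) < 1 - t := by nlinarith [ht.2]
    have d1 : HasDerivAt (fun t : ℝ => 1 + t) 1 t := (hasDerivAt_id t).const_add 1
    have d2 : HasDerivAt (fun t : ℝ => 1 - t) (-1) t := by
      simpa using (hasDerivAt_id t).const_sub 1
    have l1 := d1.log h1.ne'
    have l2 := d2.log h2.ne'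
    have d3 : HasDerivAt (fun t : ℝ => 2 * t) 2 t := by
      simpa using (hasDerivAt_id t).const_mul 2
    exact (l1.sub l2).sub d3
  have hmono : MonotoneOn g (Icc 0 x) := by
    apply monotoneOn_of_deriv_nonneg (convex_Icc 0 x)
    · apply ContinuousOn.sub
      apply ContinuousOn.sub
      · apply ContinuousOn.log (by fun_prop)
        intro t ht
        have := ht.1; nlinarith [ht.2]
      · apply ContinuousOn.log (by fun_prop)
        intro t ht
        have h2 : t ≤ x := ht.2; nlinarith
      · fun_prop
    · intro t ht
      exact ((hd t ht).differentiableAt).differentiableWithinAt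
    · intro t ht
      rw [(hd t ht).deriv]
      rw [interior_Icc] at ht
      have h1 : (0:ℝ) < 1 + t := by nlinarith [ht.1]
      have h2 : (0:ℝ) < 1 - t := by nlinarith [ht.2]
      have key : 1 / (1 + t) - (-1) / (1 - t) - 2 = 2 * t ^ 2 / ((1 + t) * (1 - t)) := by
        field_simp; ring
      rw [key]
      positivity
  have h0 : g 0 ≤ g x := hmono ⟨le_refl 0, hx0⟩ ⟨hx0, le_refl x⟩ hx0
  have hg0 : g 0 = 0 := by simp [hg]
  have h1x : (0:ℝ) < 1 + x := by linarith
  have h2x : (0:ℝ) < 1 - x := by linarith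
  rw [Real.log_div h1x.ne' h2x.ne']
  simp [hg] at h0
  linarith

theorem stmt_5 (lam α : ℝ) (hlam : 0 < lam) (hα : α ∈ Set.Ioc 0 (1 / (1 + lam))) :
    IntervalIntegrable
      (fun z => ((1 - α * z) * (1 - α) - lam * α * (1 - z)) /
        (Real.sqrt (1 - z) * Real.sqrt (2 * (1 - α * z) * (1 - α) - lam * α * (1 - z))))
      MeasureTheory.volume 0 1 ∧
    0 < Real.sqrt (α / lam) *
        ∫ z in (0:ℝ)..1, ((1 - α * z) * (1 - α) - lam * α * (1 - z)) /
          (Real.sqrt (1 - z) * Real.sqrt (2 * (1 - α * z) * (1 - α) - lam * α * (1 - z))) ∧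
    Real.sqrt (α / lam) *
        (∫ z in (0:ℝ)..1, ((1 - α * z) * (1 - α) - lam * α * (1 - z)) /
          (Real.sqrt (1 - z) * Real.sqrt (2 * (1 - α * z) * (1 - α) - lam * α * (1 - z)))) ≤
      (Real.sqrt (1 + lam) / lam) *
        Real.log ((1 + Real.sqrt α) / (1 - Real.sqrt α)) := by
  obtain ⟨hα0, hα2⟩ := hα
  have hl1 : (0:ℝ) < 1 + lam := by linarith
  have hα1 : α < 1 := lt_of_le_of_lt hα2 (by rw [div_lt_one hl1]; linarith)
  have hαl : α * (1 + lam) ≤ 1 := (le_div_iff₀ hl1).mp hα2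
  set f : ℝ → ℝ := fun z => ((1 - α * z) * (1 - α) - lam * α * (1 - z)) /
      (Real.sqrt (1 - z) * Real.sqrt (2 * (1 - α * z) * (1 - α) - lam * α * (1 - z))) with hf
  set N : ℝ → ℝ := fun z => (1 - α * z) * (1 - α) - lam * α * (1 - z) with hNdef
  set D : ℝ → ℝ := fun z => 2 * (1 - α * z) * (1 - α) - lam * α * (1 - z) with hDdef
  have hNid : ∀ z : ℝ, N z = (1 - z) * (1 - α * (1 + lam)) + z * (1 - α) ^ 2 := by
    intro z; simp only [hNdef]; ring
  have hNnn : ∀ z ∈ Icc (0:ℝ) 1, 0 ≤ N z := by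
    intro z hz
    rw [hNid]
    have h1 : 0 ≤ 1 - α * (1 + lam) := by linarith
    have t1 : 0 ≤ (1 - z) * (1 - α * (1 + lam)) :=
      mul_nonneg (by linarith [hz.2]) h1
    have t2 : 0 ≤ z * (1 - α) ^ 2 := mul_nonneg hz.1 (sq_nonneg _)
    linarith
  have hNpos : ∀ z ∈ Ioo (0:ℝ) 1, 0 < N z := by
    intro z hz
    rw [hNid]
    have h1 : 0 ≤ 1 - α * (1 + lam) := by linarith
    have t1 : 0 ≤ (1 - z) * (1 - α * (1 + lam)) :=
      mul_nonneg (by linarith [hz.2]) h1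
    have t2 : 0 < z * (1 - α) ^ 2 := mul_pos hz.1 (pow_pos (by linarith) 2)
    linarith
  have hDpos : ∀ z ∈ Icc (0:ℝ) 1, 0 < D z := by
    intro z hz
    have hN := hNnn z hz
    have : D z = N z + (1 - α * z) * (1 - α) := by simp only [hNdef, hDdef]; ring
    rw [this]
    have h2 : (1 - α) * (1 - α) ≤ (1 - α * z) * (1 - α) := by
      nlinarith [mul_nonneg (mul_nonneg hα0.le (by linarith [hz.2] : (0:ℝ) ≤ 1 - z))
        (by linarith : (0:ℝ) ≤ 1 - α)]
    nlinarith [mul_pos (by linarith : (0:ℝ) < 1 - α) (by linarith : (0:ℝ) < 1 - α)]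
  have hNleD : ∀ z ∈ Icc (0:ℝ) 1, N z ≤ D z := by
    intro z hz
    have h2 : D z - N z = (1 - α * z) * (1 - α) := by simp only [hNdef, hDdef]; ring
    nlinarith [mul_nonneg (by nlinarith [mul_le_one₀ hα1.le hz.1 hz.2] : (0:ℝ) ≤ 1 - α * z)
      (by linarith : (0:ℝ) ≤ 1 - α)]
  have hNle : ∀ z ∈ Icc (0:ℝ) 1, N z ≤ 1 - α := by
    intro z hz
    simp only [hNdef]
    have t1 : 0 ≤ lam * α * (1 - z) :=
      mul_nonneg (mul_nonneg hlam.le hα0.le) (by linarith [hz.2])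
    have t2 : (1 - α * z) * (1 - α) ≤ 1 * (1 - α) := by
      apply mul_le_mul_of_nonneg_right _ (by linarith)
      nlinarith [mul_nonneg hα0.le hz.1]
    linarith
  -- the key ratio bound
  have hratio : ∀ z ∈ Icc (0:ℝ) 1, N z / Real.sqrt (D z) ≤ Real.sqrt (1 - α) := by
    intro z hz
    have hD := hDpos z hz
    have hN := hNnn z hz
    rw [div_le_iff₀ (Real.sqrt_pos.mpr hD), ← Real.sqrt_mul (by linarith : (0:ℝ) ≤ 1 - α)]
    rw [Real.le_sqrt hN (mul_nonneg (by linarith) hD.le)]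
    nlinarith [hNle z hz, hNleD z hz]
  -- integrable comparison functions
  have hIr : IntervalIntegrable (fun z : ℝ => (1 - z) ^ (-(1/2) : ℝ)) volume 0 1 := by
    have h := (intervalIntegrable_rpow' (a := 0) (b := 1) (r := -(1/2)) (by norm_num)).comp_sub_left 1
    simpa using h.symm
  have hcont : ContinuousOn (fun z => N z / Real.sqrt (D z)) (uIcc (0:ℝ) 1) := by
    rw [uIcc_of_le zero_le_one]
    apply ContinuousOn.div
    · fun_prop
    · fun_prop
    · intro z hz
      exact (Real.sqrt_pos.mpr (hDpos z hz)).ne'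
  set F : ℝ → ℝ := fun z => (N z / Real.sqrt (D z)) * (1 - z) ^ (-(1/2) : ℝ) with hFdef
  have hIF : IntervalIntegrable F volume 0 1 := hIr.continuousOn_mul hcont
  have hEq : ∀ z ∈ Icc (0:ℝ) 1, f z = F z := by
    intro z hz
    have h1z : (0:ℝ) ≤ 1 - z := by linarith [hz.2]
    simp only [hf, hFdef, hNdef, hDdef]
    rw [Real.rpow_neg h1z, ← Real.sqrt_eq_rpow]
    rw [div_eq_mul_inv, div_eq_mul_inv, mul_inv]
    ring
  have hIf : IntervalIntegrable f volume 0 1 := by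
    rw [intervalIntegrable_iff] at hIF ⊢
    refine hIF.congr_fun ?_ measurableSet_uIoc
    intro z hz
    rw [uIoc_of_le zero_le_one] at hz
    exact (hEq z (Ioc_subset_Icc_self hz)).symm
  have hIeq : (∫ z in (0:ℝ)..1, f z) = ∫ z in (0:ℝ)..1, F z := by
    apply intervalIntegral.integral_congr
    rw [uIcc_of_le zero_le_one]
    exact hEq
  refine ⟨hIf, ?_, ?_⟩
  · have hpos : 0 < ∫ z in (0:ℝ)..1, f z := by
      apply intervalIntegral_pos_of_pos_on hIf _ zero_lt_one
      intro z hz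
      have hN := hNpos z hz
      have hD := hDpos z (Ioo_subset_Icc_self hz)
      have h1z : (0:ℝ) < 1 - z := by linarith [hz.2]
      have hfz : f z = N z / (Real.sqrt (1 - z) * Real.sqrt (D z)) := rfl
      rw [hfz]
      exact div_pos hN (mul_pos (Real.sqrt_pos.mpr h1z) (Real.sqrt_pos.mpr hD))
    exact mul_pos (Real.sqrt_pos.mpr (div_pos hα0 hlam)) hpos
  · -- upper bound
    set G : ℝ → ℝ := fun z => Real.sqrt (1 - α) * (1 - z) ^ (-(1/2) : ℝ) with hGdef
    have hIG : IntervalIntegrable G volume 0 1 := hIr.const_mul _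
    have hFG : (∫ z in (0:ℝ)..1, F z) ≤ ∫ z in (0:ℝ)..1, G z := by
      apply integral_mono_on zero_le_one hIF hIG
      intro z hz
      simp only [hFdef, hGdef]
      apply mul_le_mul_of_nonneg_right (hratio z hz)
      exact Real.rpow_nonneg (by linarith [hz.2]) _
    have hGval : (∫ z in (0:ℝ)..1, G z) = Real.sqrt (1 - α) * 2 := by
      rw [hGdef]
      rw [intervalIntegral.integral_const_mul]
      have h1 : (∫ z in (0:ℝ)..1, (1 - z) ^ (-(1/2) : ℝ))
          = ∫ z in (0:ℝ)..1, z ^ (-(1/2) : ℝ) := by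
        have := intervalIntegral.integral_comp_sub_left (a := 0) (b := 1)
          (fun x : ℝ => x ^ (-(1/2) : ℝ)) 1
        simpa using this
      rw [h1, integral_rpow (Or.inl (by norm_num))]
      norm_num
    have hI2 : (∫ z in (0:ℝ)..1, f z) ≤ Real.sqrt (1 - α) * 2 := by
      rw [hIeq, ← hGval]; exact hFG
    -- arithmetic finish
    have hs0 : 0 < Real.sqrt α := Real.sqrt_pos.mpr hα0
    have hs1 : Real.sqrt α < 1 := by
      rw [show (1:ℝ) = Real.sqrt 1 by simp]
      exact Real.sqrt_lt_sqrt hα0.le hα1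
    have hL : 2 * Real.sqrt α ≤ Real.log ((1 + Real.sqrt α) / (1 - Real.sqrt α)) :=
      two_mul_le_log_aux hs0.le hs1
    have hsaldiv : Real.sqrt (α / lam) = Real.sqrt α / Real.sqrt lam := by
      rw [Real.sqrt_div hα0.le]
    have hul : 0 < Real.sqrt lam := Real.sqrt_pos.mpr hlam
    have hlv : lam ≤ Real.sqrt lam * Real.sqrt (1 + lam) := by
      rw [← Real.sqrt_mul hlam.le]
      calc lam = Real.sqrt (lam ^ 2) := (Real.sqrt_sq hlam.le).symm
        _ ≤ Real.sqrt (lam * (1 + lam)) := Real.sqrt_le_sqrt (by nlinarith)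
    have ht1 : Real.sqrt (1 - α) ≤ 1 := Real.sqrt_le_one.mpr (by linarith)
    -- chain
    have step1 : Real.sqrt (α / lam) * (∫ z in (0:ℝ)..1, f z)
        ≤ Real.sqrt (α / lam) * (Real.sqrt (1 - α) * 2) :=
      mul_le_mul_of_nonneg_left hI2 (Real.sqrt_nonneg _)
    have step2 : Real.sqrt (α / lam) * (Real.sqrt (1 - α) * 2)
        ≤ 2 * Real.sqrt α / Real.sqrt lam := by
      rw [hsaldiv]
      rw [div_mul_eq_mul_div, div_le_div_iff₀ hul hul]
      nlinarith [mul_nonneg (mul_nonneg hs0.le hul.le) (sub_nonneg.mpr ht1)]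
    have step3 : 2 * Real.sqrt α / Real.sqrt lam
        ≤ (Real.sqrt (1 + lam) / lam) * (2 * Real.sqrt α) := by
      rw [div_mul_eq_mul_div, div_le_div_iff₀ hul hlam]
      nlinarith [mul_nonneg (mul_nonneg (by norm_num : (0:ℝ) ≤ 2) hs0.le) (sub_nonneg.mpr hlv)]
    have step4 : (Real.sqrt (1 + lam) / lam) * (2 * Real.sqrt α)
        ≤ (Real.sqrt (1 + lam) / lam) * Real.log ((1 + Real.sqrt α) / (1 - Real.sqrt α)) :=
      mul_le_mul_of_nonneg_left hL (by positivity)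
    calc Real.sqrt (α / lam) * (∫ z in (0:ℝ)..1, f z)
        ≤ Real.sqrt (α / lam) * (Real.sqrt (1 - α) * 2) := step1
      _ ≤ 2 * Real.sqrt α / Real.sqrt lam := step2
      _ ≤ (Real.sqrt (1 + lam) / lam) * (2 * Real.sqrt α) := step3
      _ ≤ _ := step4
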